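/- Let K ≥ 1, let μ_1, …, μ_K be probability measures on ℝ with quantile functions f_1, …, f_K, and let β_1, …, β_K be nonnegative real numbers. Then there exists a probability measure ν on ℝ whose quantile function agrees on (0,1) with the quantile mixture ω ↦ Σ_{k=1}^K β_k f_k(ω). (A nonnegatively weighted sum of quantile functions is itself the quantile function of a probability distribution, i.e., the nonnegativity condition on the model parameters makes the quantile mixture a valid quantile function.) -/

import Mathlib

open MeasureTheory

/-- The cumulative distribution function of a measure on `ℝ`: `F_μ(x) = μ (-∞, x]`. -/
noncomputable def cdfOf (μ : Measure ℝ) (x : ℝ) : ℝ :=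
  (μ (Set.Iic x)).toReal

/-- The quantile function (generalized inverse CDF) of a measure on `ℝ`:
`f_μ(ω) = inf {x | ω ≤ F_μ(x)}`. -/
noncomputable def quantile (μ : Measure ℝ) (ω : ℝ) : ℝ :=
  sInf {x : ℝ | ω ≤ cdfOf μ x}

section aux

open Filter Topology

variable {μ : Measure ℝ} [IsProbabilityMeasure μ]

lemma cdfOf_eq_cdf (μ : Measure ℝ) [IsProbabilityMeasure μ] :
    cdfOf μ = ⇑(ProbabilityTheory.cdf μ) := by
  funext x
  rw [cdfOf, ProbabilityTheory.cdf_eq_real, Measure.real]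

lemma cdfOf_mono (μ : Measure ℝ) [IsProbabilityMeasure μ] : Monotone (cdfOf μ) := by
  rw [cdfOf_eq_cdf]; exact ProbabilityTheory.monotone_cdf μ

lemma nonempty_quantile_set {ω : ℝ} (hω : ω < 1) : {x : ℝ | ω ≤ cdfOf μ x}.Nonempty := by
  rw [cdfOf_eq_cdf]
  have h := (ProbabilityTheory.tendsto_cdf_atTop μ).eventually (eventually_ge_nhds hω)
  exact h.exists

lemma bddBelow_quantile_set {ω : ℝ} (hω : 0 < ω) : BddBelow {x : ℝ | ω ≤ cdfOf μ x} := by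
  have h := (ProbabilityTheory.tendsto_cdf_atBot μ).eventually (eventually_lt_nhds hω)
  obtain ⟨x₀, hx₀⟩ := eventually_atBot.mp h
  refine ⟨x₀, fun x hx => ?_⟩
  by_contra hlt
  push_neg at hlt
  have := hx₀ x hlt.le
  rw [← cdfOf_eq_cdf] at this
  exact absurd hx (by simp [Set.mem_setOf_eq]; linarith)

lemma le_cdfOf_quantile {ω : ℝ} (hω : ω ∈ Set.Ioo (0:ℝ) 1) :
    ω ≤ cdfOf μ (quantile μ ω) := by
  set a := quantile μ ω with ha
  have hne := nonempty_quantile_set (μ := μ) hω.2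
  have hbdd := bddBelow_quantile_set (μ := μ) hω.1
  have hbound : ∀ n : ℕ, ω ≤ cdfOf μ (a + 1 / (n + 1)) := by
    intro n
    have hpos : (0:ℝ) < 1 / (n + 1) := by positivity
    have : sInf {x : ℝ | ω ≤ cdfOf μ x} < a + 1 / (n + 1) := by
      rw [show sInf {x : ℝ | ω ≤ cdfOf μ x} = a from rfl]; linarith
    obtain ⟨x, hx, hxlt⟩ := (csInf_lt_iff hbdd hne).mp this
    exact hx.trans (cdfOf_mono μ hxlt.le)
  have hseq : Tendsto (fun n : ℕ => a + 1 / (n + 1 : ℝ)) atTop (𝓝[Set.Ici a] a) := by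
    rw [tendsto_nhdsWithin_iff]
    constructor
    · have := tendsto_one_div_add_atTop_nhds_zero_nat (𝕜 := ℝ)
      have h2 := (tendsto_const_nhds (x := a) (f := atTop (α := ℕ))).add this
      simpa using h2
    · filter_upwards with n
      have hpos : (0:ℝ) < 1 / (n + 1) := by positivity
      simp only [Set.mem_Ici]; linarith
  have hrc := ((ProbabilityTheory.cdf μ).right_continuous a).tendsto.comp hseq
  have : ω ≤ ProbabilityTheory.cdf μ a := by
    refine ge_of_tendsto' hrc fun n => ?_
    have := hbound n
    rwa [cdfOf_eq_cdf] at this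
  rwa [cdfOf_eq_cdf]

lemma quantile_le_iff {ω x : ℝ} (hω : ω ∈ Set.Ioo (0:ℝ) 1) :
    quantile μ ω ≤ x ↔ ω ≤ cdfOf μ x := by
  constructor
  · intro h
    exact (le_cdfOf_quantile hω).trans (cdfOf_mono μ h)
  · intro h
    exact csInf_le (bddBelow_quantile_set hω.1) h

lemma quantile_mono {ω ω' : ℝ} (h0 : 0 < ω) (h : ω ≤ ω') (h1 : ω' < 1) :
    quantile μ ω ≤ quantile μ ω' :=
  csInf_le_csInf (bddBelow_quantile_set h0)
    (nonempty_quantile_set h1)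
    (fun x hx => le_trans h hx)

lemma exists_lt_quantile {ω y : ℝ} (hω : ω ∈ Set.Ioo (0:ℝ) 1) (hy : y < quantile μ ω) :
    ∃ ω', ω' ∈ Set.Ioo (0:ℝ) ω ∧ y < quantile μ ω' := by
  have hFy : cdfOf μ y < ω := by
    by_contra h
    push_neg at h
    exact absurd ((quantile_le_iff hω).mpr h) (not_le.mpr hy)
  set m := max (cdfOf μ y) (ω / 2) with hm
  have hm_lt : m < ω := max_lt hFy (by linarith [hω.1])
  set ω' := (m + ω) / 2 with hω'
  have h1 : m < ω' := by rw [hω']; linarith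
  have h2 : ω' < ω := by rw [hω']; linarith
  have h3 : 0 < ω' := lt_of_le_of_lt (le_trans (by linarith [hω.1]) (le_max_right (cdfOf μ y) (ω/2))) h1
  have h4 : ω' < 1 := h2.trans hω.2
  refine ⟨ω', ⟨h3, h2⟩, ?_⟩
  by_contra h
  push_neg at h
  have := (quantile_le_iff (μ := μ) ⟨h3, h4⟩).mp h
  have hFy' : cdfOf μ y < ω' := lt_of_le_of_lt (le_max_left _ _) h1
  linarith

end aux

/-- **A quantile mixture with nonnegative weights is a valid quantile function.** Given
probability measures `μ k` and nonnegative reals `β k`, there exists a probability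
measure `ν` whose quantile function agrees on `(0, 1)` with
`ω ↦ ∑ k, β k * quantile (μ k) ω`. -/
theorem quantile_mixture_is_quantile_function {K : ℕ} (hK : 1 ≤ K)
    (μ : Fin K → Measure ℝ) [∀ k, IsProbabilityMeasure (μ k)]
    (β : Fin K → ℝ) (hβ : ∀ k, 0 ≤ β k) :
    ∃ ν : Measure ℝ, IsProbabilityMeasure ν ∧
      ∀ ω ∈ Set.Ioo (0 : ℝ) 1,
        quantile ν ω = ∑ k : Fin K, β k * quantile (μ k) ω := by
  haveI : Nonempty (Fin K) := ⟨⟨0, hK⟩⟩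
  set g : ℝ → ℝ := fun ω => ∑ k : Fin K, β k * quantile (μ k) ω with hg
  -- g is monotone on (0,1)
  have hmono : MonotoneOn g (Set.Ioo (0:ℝ) 1) := by
    intro a ha b hb hab
    apply Finset.sum_le_sum
    intro k _
    exact mul_le_mul_of_nonneg_left (quantile_mono ha.1 hab hb.2) (hβ k)
  -- left continuity property of g
  have hleft : ∀ ω ∈ Set.Ioo (0:ℝ) 1, ∀ x < g ω, ∃ ω'', ω'' ∈ Set.Ioo (0:ℝ) ω ∧ x < g ω'' := by
    intro ω hω x hx
    set ε := g ω - x with hε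
    have hεpos : 0 < ε := by rw [hε]; linarith
    have hKpos : (0:ℝ) < K := by exact_mod_cast hK
    have hchoice : ∀ k : Fin K, ∃ ωk, ωk ∈ Set.Ioo (0:ℝ) ω ∧
        β k * quantile (μ k) ω - β k * quantile (μ k) ωk < ε / K := by
      intro k
      rcases eq_or_lt_of_le (hβ k) with hk0 | hkpos
      · exact ⟨ω / 2, ⟨by linarith [hω.1], by linarith [hω.1]⟩, by
          rw [← hk0]; simpa using (by positivity : (0:ℝ) < ε / K)⟩
      · have hy : quantile (μ k) ω - ε / (K * β k) < quantile (μ k) ω := by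
          have : 0 < ε / (K * β k) := by positivity
          linarith
        obtain ⟨ωk, hωk, hlt⟩ := exists_lt_quantile hω hy
        refine ⟨ωk, hωk, ?_⟩
        have : quantile (μ k) ω - quantile (μ k) ωk < ε / (K * β k) := by linarith
        calc β k * quantile (μ k) ω - β k * quantile (μ k) ωk
            = β k * (quantile (μ k) ω - quantile (μ k) ωk) := by ring
          _ < β k * (ε / (K * β k)) := by
              exact mul_lt_mul_of_pos_left this hkpos
          _ = ε / K := by field_simp
    choose ωc hωc hωclt using hchoice
    set ω'' := Finset.univ.sup' Finset.univ_nonempty ωc with hω''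
    have hmem : ∀ k, ωc k ≤ ω'' := fun k => Finset.le_sup' ωc (Finset.mem_univ k)
    obtain ⟨k₀, _, hk₀⟩ := Finset.exists_mem_eq_sup' Finset.univ_nonempty ωc
    have hω''mem : ω'' ∈ Set.Ioo (0:ℝ) ω := by rw [hω'', hk₀]; exact hωc k₀
    refine ⟨ω'', hω''mem, ?_⟩
    have hsum : g ω - g ω'' < ε := by
      have h1 : g ω - g ω'' = ∑ k : Fin K, (β k * quantile (μ k) ω - β k * quantile (μ k) ω'') := by
        rw [hg]; rw [← Finset.sum_sub_distrib]
      rw [h1]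
      calc ∑ k : Fin K, (β k * quantile (μ k) ω - β k * quantile (μ k) ω'')
          ≤ ∑ k : Fin K, (β k * quantile (μ k) ω - β k * quantile (μ k) (ωc k)) := by
            apply Finset.sum_le_sum
            intro k _
            have : quantile (μ k) (ωc k) ≤ quantile (μ k) ω'' :=
              quantile_mono (hωc k).1 (hmem k) (hω''mem.2.trans hω.2)
            nlinarith [hβ k]
        _ < ∑ _k : Fin K, ε / K := by
            apply Finset.sum_lt_sum_of_nonempty Finset.univ_nonempty
            intro k _
            exact hωclt k
        _ = ε := by
            rw [Finset.sum_const, Finset.card_univ, Fintype.card_fin, nsmul_eq_mul]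
            field_simp
    linarith
  -- the measure
  have hgmeas : AEMeasurable g (volume.restrict (Set.Ioo (0:ℝ) 1)) :=
    aemeasurable_restrict_of_monotoneOn measurableSet_Ioo hmono
  haveI hProbRes : IsProbabilityMeasure (volume.restrict (Set.Ioo (0:ℝ) 1)) := by
    constructor
    rw [Measure.restrict_apply MeasurableSet.univ, Set.univ_inter, Real.volume_Ioo]
    norm_num
  set ν := Measure.map g (volume.restrict (Set.Ioo (0:ℝ) 1)) with hν
  haveI hProb : IsProbabilityMeasure ν := Measure.isProbabilityMeasure_map hgmeas
  have hcdf : ∀ x : ℝ, cdfOf ν x = (volume (g ⁻¹' Set.Iic x ∩ Set.Ioo (0:ℝ) 1)).toReal := by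
    intro x
    rw [cdfOf, hν, Measure.map_apply_of_aemeasurable hgmeas measurableSet_Iic,
      Measure.restrict_apply' measurableSet_Ioo]
  have hfin : ∀ x : ℝ, volume (g ⁻¹' Set.Iic x ∩ Set.Ioo (0:ℝ) 1) ≤ 1 := by
    intro x
    calc volume (g ⁻¹' Set.Iic x ∩ Set.Ioo (0:ℝ) 1) ≤ volume (Set.Ioo (0:ℝ) 1) :=
          measure_mono Set.inter_subset_right
      _ = 1 := by rw [Real.volume_Ioo]; norm_num
  refine ⟨ν, hProb, fun ω hω => ?_⟩
  -- ω ≤ cdf ν (g ω)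
  have hA : ω ≤ cdfOf ν (g ω) := by
    rw [hcdf]
    have hsub : Set.Ioo (0:ℝ) ω ⊆ g ⁻¹' Set.Iic (g ω) ∩ Set.Ioo (0:ℝ) 1 := by
      intro t ht
      have ht1 : t ∈ Set.Ioo (0:ℝ) 1 := ⟨ht.1, ht.2.trans hω.2⟩
      exact ⟨hmono ht1 hω ht.2.le, ht1⟩
    have h2 := measure_mono (μ := (volume : Measure ℝ)) hsub
    rw [Real.volume_Ioo, sub_zero] at h2
    exact (ENNReal.ofReal_le_iff_le_toReal
      (ne_top_of_le_ne_top (by norm_num) (hfin (g ω)))).mp h2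
  -- for x < g ω, cdf ν x < ω
  have hB : ∀ x < g ω, cdfOf ν x < ω := by
    intro x hx
    obtain ⟨ω'', hω''mem, hω''⟩ := hleft ω hω x hx
    have hsub : g ⁻¹' Set.Iic x ∩ Set.Ioo (0:ℝ) 1 ⊆ Set.Ioo (0:ℝ) ω'' := by
      intro t ⟨htx, ht1⟩
      refine ⟨ht1.1, ?_⟩
      by_contra h
      push_neg at h
      have : g ω'' ≤ g t := hmono ⟨hω''mem.1, hω''mem.2.trans hω.2⟩ ht1 h
      have : g ω'' ≤ x := this.trans htx
      linarith
    rw [hcdf]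
    have hm2 := measure_mono (μ := (volume : Measure ℝ)) hsub
    rw [Real.volume_Ioo, sub_zero] at hm2
    calc (volume (g ⁻¹' Set.Iic x ∩ Set.Ioo (0:ℝ) 1)).toReal
        ≤ (ENNReal.ofReal ω'').toReal := by
          exact ENNReal.toReal_mono (by simp) hm2
      _ = ω'' := ENNReal.toReal_ofReal hω''mem.1.le
      _ < ω := hω''mem.2
  -- conclude
  have hA' : g ω ∈ {x : ℝ | ω ≤ cdfOf ν x} := hA
  have hle : quantile ν ω ≤ g ω := csInf_le (bddBelow_quantile_set (μ := ν) hω.1) hA'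
  have hge : g ω ≤ quantile ν ω := by
    show g ω ≤ sInf {x : ℝ | ω ≤ cdfOf ν x}
    apply le_csInf ⟨g ω, hA'⟩
    intro x hx
    by_contra h
    push_neg at h
    exact absurd hx (not_le.mpr (hB x h))
  exact le_antisymm hle hge
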